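/- The space of degree 2δ+1 polynomials vanishing on the C(δ+n,n) intersection points Z of δ+n general hyperplanes h_1,…,h_{δ+n} in ℙ^n is spanned by monomials h_I = ∏ h_i^{k_i} with total degree |I| = 2δ+1, support of size at least δ+1, and all exponents k_i ≤ 2. -/

import Mathlib

open MvPolynomial

/-- The linear form with coefficient vector `c`, as a polynomial. -/
noncomputable def linForm {n : ℕ} (c : Fin n → ℂ) : MvPolynomial (Fin n) ℂ :=
  ∑ i, MvPolynomial.C (c i) * MvPolynomial.X i

/-- The affine cone over the point set `Z`: nonzero points lying on (at least) `n` of the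
hyperplanes `h_i = 0`. -/
def coneZ (n δ : ℕ) (h : Fin (δ + n) → (Fin (n + 1) → ℂ)) : Set (Fin (n + 1) → ℂ) :=
  {x | x ≠ 0 ∧ ∃ L : Finset (Fin (δ + n)), L.card = n ∧
    ∀ i ∈ L, MvPolynomial.eval x (linForm (h i)) = 0}

/-- The submodule of polynomials vanishing on `Z`. -/
noncomputable def vanishZ (n δ : ℕ) (h : Fin (δ + n) → (Fin (n + 1) → ℂ)) :
    Submodule ℂ (MvPolynomial (Fin (n + 1)) ℂ) :=
  ⨅ x ∈ coneZ n δ h, LinearMap.ker (MvPolynomial.aeval x).toLinearMap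

namespace StarCfg

variable {n δ : ℕ} (h : Fin (δ + n) → (Fin (n + 1) → ℂ))

/-- the product of linear forms with exponent vector k -/
noncomputable def pw (k : Fin (δ + n) → ℕ) : MvPolynomial (Fin (n + 1)) ℂ :=
  ∏ i, (linForm (h i)) ^ (k i)

lemma linForm_eval (x : Fin (n+1) → ℂ) (c : Fin (n+1) → ℂ) :
    MvPolynomial.eval x (linForm c) = ∑ i, c i * x i := by
  simp [linForm]

lemma linForm_isHomogeneous (c : Fin (n+1) → ℂ) : (linForm c).IsHomogeneous 1 := by
  apply MvPolynomial.IsHomogeneous.sum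
  intro i _
  exact MvPolynomial.isHomogeneous_C_mul_X _ _

lemma pw_isHomogeneous (k : Fin (δ + n) → ℕ) : (pw h k).IsHomogeneous (∑ i, k i) := by
  apply MvPolynomial.IsHomogeneous.prod
  intro i _
  simpa using (linForm_isHomogeneous (h i)).pow (k i)

lemma pw_eval (x : Fin (n+1) → ℂ) (k : Fin (δ + n) → ℕ) :
    MvPolynomial.eval x (pw h k) = ∏ i, (∑ t, h i t * x t) ^ (k i) := by
  simp [pw, linForm_eval]

lemma linForm_sum_smul {ι : Type*} (B : Finset ι) (c : ι → ℂ) (v : ι → (Fin (n+1) → ℂ)) :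
    linForm (∑ j ∈ B, c j • v j) = ∑ j ∈ B, MvPolynomial.C (c j) * linForm (v j) := by
  unfold linForm
  simp only [Finset.mul_sum]
  rw [Finset.sum_comm]
  congr 1
  ext i
  simp [Finset.sum_mul, map_sum, ← mul_assoc]

variable (hgen : ∀ T : Finset (Fin (δ + n)), T.card = n + 1 →
      LinearIndependent ℂ (fun i : T => h i))

include hgen in
lemma expand_vector {B : Finset (Fin (δ + n))} (hB : B.card = n + 1)
    (v : Fin (n+1) → ℂ) : ∃ c : Fin (δ + n) → ℂ, v = ∑ j ∈ B, c j • h j := by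
  have hind := hgen B hB
  have hcard : Fintype.card B = Module.finrank ℂ (Fin (n+1) → ℂ) := by
    simp [Fintype.card_coe, hB]
  have hne : B.Nonempty := by rw [← Finset.card_pos, hB]; omega
  haveI : Nonempty B := hne.coe_sort
  have hspan := hind.span_eq_top_of_card_eq_finrank hcard
  have hv : v ∈ Submodule.span ℂ (Set.range fun j : B => h j) := by
    rw [hspan]; trivial
  obtain ⟨c, hc⟩ := (Submodule.mem_span_range_iff_exists_fun ℂ).1 hv
  classical
  refine ⟨fun j => if hj : j ∈ B then c ⟨j, hj⟩ else 0, ?_⟩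
  rw [← hc, ← Finset.sum_attach B (fun j => (if hj : j ∈ B then c ⟨j, hj⟩ else 0) • h j)]
  apply Finset.sum_congr rfl
  intro j _
  simp [j.2]

lemma pw_add_single (k : Fin (δ + n) → ℕ) (i : Fin (δ + n)) :
    pw h (k + Pi.single i 1) = linForm (h i) * pw h k := by
  classical
  unfold pw
  simp only [Pi.add_apply, pow_add, Finset.prod_mul_distrib]
  rw [mul_comm]
  congr 1
  rw [Finset.prod_eq_single i]
  · simp
  · intro b _ hb; simp [Pi.single_eq_of_ne hb]
  · simp

include hgen in
lemma exchange (k : Fin (δ + n) → ℕ) (i : Fin (δ + n)) {B : Finset (Fin (δ + n))}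
    (hB : B.card = n + 1) :
    ∃ c : Fin (δ + n) → ℂ,
      pw h (k + Pi.single i 1) = ∑ b ∈ B, c b • pw h (k + Pi.single b 1) := by
  obtain ⟨c, hc⟩ := expand_vector h hgen hB (h i)
  refine ⟨c, ?_⟩
  rw [pw_add_single, hc, linForm_sum_smul, Finset.sum_mul]
  apply Finset.sum_congr rfl
  intro b _
  rw [pw_add_single, MvPolynomial.smul_eq_C_mul, mul_assoc]

/-- the dot-product linear functional -/
noncomputable def dotL (c : Fin (n+1) → ℂ) : (Fin (n+1) → ℂ) →ₗ[ℂ] ℂ where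
  toFun x := ∑ t, c t * x t
  map_add' x y := by simp [mul_add, Finset.sum_add_distrib]
  map_smul' r x := by simp [Finset.mul_sum, mul_left_comm]

include hgen in
lemma exists_point (hδ : 1 ≤ δ) {L : Finset (Fin (δ + n))} (hL : L.card = n) :
    ∃ x : Fin (n+1) → ℂ, x ∈ coneZ n δ h ∧
      (∀ i ∈ L, (∑ t, h i t * x t) = 0) ∧ (∀ i ∉ L, (∑ t, h i t * x t) ≠ 0) := by
  classical
  -- the joint evaluation map has nontrivial kernel
  let φ : (Fin (n+1) → ℂ) →ₗ[ℂ] (L → ℂ) := LinearMap.pi (fun i : L => dotL (h i))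
  have hninj : ¬ Function.Injective φ := by
    intro hinj
    have hle := LinearMap.finrank_le_finrank_of_injective hinj
    have h1 : Module.finrank ℂ (Fin (n+1) → ℂ) = n + 1 := by simp
    have h2 : Module.finrank ℂ (L → ℂ) = n := by simp [hL]
    omega
  rw [Function.not_injective_iff] at hninj
  obtain ⟨a, b, hab, hne⟩ := hninj
  set x := a - b with hx
  have hx0 : x ≠ 0 := sub_ne_zero.2 hne
  have hker : ∀ i ∈ L, (∑ t, h i t * x t) = 0 := by
    intro i hi
    have : φ x = 0 := by rw [hx, map_sub, hab, sub_self]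
    have := congrFun this ⟨i, hi⟩
    simpa [φ, dotL] using this
  have hnv : ∀ i ∉ L, (∑ t, h i t * x t) ≠ 0 := by
    intro i hi hzero
    -- x is killed by the n+1 independent forms indexed by insert i L, so x = 0
    have hT : (insert i L).card = n + 1 := by rw [Finset.card_insert_of_notMem hi, hL]
    haveI : Nonempty (insert i L : Finset (Fin (δ+n))) := by
      apply Finset.Nonempty.coe_sort; rw [← Finset.card_pos, hT]; omega
    have hspan : Submodule.span ℂ (Set.range fun j : (insert i L : Finset _) => h j) = ⊤ := by
      apply (hgen _ hT).span_eq_top_of_card_eq_finrank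
      rw [show Module.finrank ℂ (Fin (n+1) → ℂ) = n + 1 by simp, ← hT]
      exact Fintype.card_coe _
    have hvan : ∀ v ∈ Submodule.span ℂ (Set.range fun j : (insert i L : Finset _) => h j),
        (dotL x) v = 0 := by
      intro v hv
      induction hv using Submodule.span_induction with
      | mem v hv =>
        obtain ⟨⟨j, hj⟩, rfl⟩ := hv
        rcases Finset.mem_insert.1 hj with rfl | hjL
        · simpa [dotL, mul_comm] using hzero
        · simpa [dotL, mul_comm] using hker j hjL
      | zero => simp
      | add u v _ _ hu hv => simp [hu, hv]
      | smul r u _ hu => simp [hu]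
    apply hx0
    funext t
    have := hvan (Pi.single t 1) (by rw [hspan]; trivial)
    simpa [dotL, Pi.single_apply] using this
  refine ⟨x, ⟨hx0, L, hL, ?_⟩, hker, hnv⟩
  intro i hi
  rw [linForm_eval]
  exact hker i hi

/-- support of an exponent vector -/
def suppk (k : Fin (δ + n) → ℕ) : Finset (Fin (δ + n)) :=
  Finset.univ.filter (fun i => k i ≠ 0)

lemma aeval_eq_eval (x : Fin (n+1) → ℂ) (p : MvPolynomial (Fin (n+1)) ℂ) :
    MvPolynomial.aeval x p = MvPolynomial.eval x p := by
  rw [MvPolynomial.aeval_def, MvPolynomial.eval, Algebra.algebraMap_self]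
  rfl

lemma pw_mem_vanish (k : Fin (δ + n) → ℕ) (hsupp : δ + 1 ≤ (suppk (n := n) (δ := δ) k).card) :
    pw h k ∈ vanishZ n δ h := by
  classical
  simp only [vanishZ, Submodule.mem_iInf, LinearMap.mem_ker, AlgHom.toLinearMap_apply]
  intro x hx
  obtain ⟨hx0, L, hL, hvan⟩ := hx
  have hex : ∃ i ∈ L, k i ≠ 0 := by
    by_contra hc
    push_neg at hc
    have hsub : suppk (n := n) (δ := δ) k ⊆ Finset.univ \ L := by
      intro a ha
      simp only [suppk, Finset.mem_filter] at ha
      simp only [Finset.mem_sdiff, Finset.mem_univ, true_and]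
      intro haL
      exact ha.2 (hc a haL)
    have h1 := Finset.card_le_card hsub
    have h2 : (Finset.univ \ L).card = δ := by
      rw [Finset.card_sdiff_of_subset (Finset.subset_univ L), Finset.card_univ, Fintype.card_fin, hL]
      omega
    omega
  obtain ⟨i, hiL, hki⟩ := hex
  rw [aeval_eq_eval]
  unfold pw
  rw [map_prod]
  apply Finset.prod_eq_zero (Finset.mem_univ i)
  rw [map_pow, hvan i hiL]
  exact zero_pow hki

lemma pw_mem_LHS (k : Fin (δ + n) → ℕ) (hsum : (∑ i, k i) = 2 * δ + 1)
    (hsupp : δ + 1 ≤ (suppk (n := n) (δ := δ) k).card) :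
    pw h k ∈ MvPolynomial.homogeneousSubmodule (Fin (n + 1)) ℂ (2 * δ + 1) ⊓ vanishZ n δ h := by
  rw [Submodule.mem_inf]
  constructor
  · rw [MvPolynomial.mem_homogeneousSubmodule, ← hsum]
    exact pw_isHomogeneous h k
  · exact pw_mem_vanish h k hsupp

/-- span of all products of `d` of the linear forms -/
noncomputable def Adeg (d : ℕ) : Submodule ℂ (MvPolynomial (Fin (n + 1)) ℂ) :=
  Submodule.span ℂ {p | ∃ k : Fin (δ + n) → ℕ, (∑ i, k i) = d ∧ p = pw h k}

lemma sum_single (j : Fin (δ + n)) : ∑ i, (Pi.single j 1 : Fin (δ + n) → ℕ) i = 1 := by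
  simp [Pi.single_apply]

include hgen in
lemma X_mul_mem (hδ : 1 ≤ δ) (d : ℕ) (t : Fin (n+1)) {q : MvPolynomial (Fin (n + 1)) ℂ}
    (hq : q ∈ Adeg h d) : MvPolynomial.X t * q ∈ Adeg h (d + 1) := by
  classical
  obtain ⟨B0, -, hB0⟩ := Finset.exists_subset_card_eq
    (show n + 1 ≤ (Finset.univ : Finset (Fin (δ+n))).card by
      rw [Finset.card_univ, Fintype.card_fin]; omega)
  induction hq using Submodule.span_induction with
  | mem q hq =>
    obtain ⟨k, hk, rfl⟩ := hq
    obtain ⟨c, hc⟩ := expand_vector h hgen hB0 (Pi.single t 1)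
    have hXt : MvPolynomial.X t = linForm (Pi.single t 1) := by
      unfold linForm
      rw [Finset.sum_eq_single t]
      · simp
      · intro b _ hb; simp [Pi.single_eq_of_ne hb]
      · simp
    rw [hXt, hc, linForm_sum_smul, Finset.sum_mul]
    apply Submodule.sum_mem
    intro j _
    rw [mul_assoc, ← pw_add_single, ← MvPolynomial.smul_eq_C_mul]
    apply Submodule.smul_mem
    apply Submodule.subset_span
    refine ⟨k + Pi.single j 1, ?_, rfl⟩
    simp only [Pi.add_apply, Finset.sum_add_distrib, hk, sum_single]
  | zero => simp [Submodule.zero_mem]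
  | add u v _ _ hu hv => rw [mul_add]; exact Submodule.add_mem _ hu hv
  | smul r u _ hu => rw [mul_smul_comm]; exact Submodule.smul_mem _ r hu

include hgen in
lemma monomial_mem (hδ : 1 ≤ δ) : ∀ (d : ℕ) (α : Fin (n+1) →₀ ℕ), (∑ i, α i) = d →
    MvPolynomial.monomial α (1:ℂ) ∈ Adeg h d := by
  intro d
  induction d with
  | zero =>
    intro α hα
    have hz : α = 0 := by
      ext i
      have := Finset.sum_eq_zero_iff.1 hα i (Finset.mem_univ i)
      simpa using this
    subst hz
    apply Submodule.subset_span
    refine ⟨0, by simp, ?_⟩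
    simp [pw]
  | succ d ih =>
    intro α hα
    have hex : ∃ t, α t ≠ 0 := by
      by_contra hc
      push_neg at hc
      simp [hc] at hα
    obtain ⟨t, ht⟩ := hex
    set β := α - Finsupp.single t 1 with hβ
    have hαβ : α = Finsupp.single t 1 + β := by
      ext i
      have hb : β i = α i - (Finsupp.single t 1 : Fin (n+1) →₀ ℕ) i := by
        simp [hβ]
      rcases eq_or_ne t i with rfl | hne
      · simp only [Finsupp.add_apply, hb, Finsupp.single_eq_same]
        have : α t ≠ 0 := ht
        omega
      · simp [Finsupp.add_apply, hb, Finsupp.single_eq_of_ne' hne]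
    have h2 : (∑ i, (Finsupp.single t 1 : Fin (n+1) →₀ ℕ) i) = 1 := by
      rw [Finset.sum_eq_single t]
      · simp
      · intro b _ hb; simp [Finsupp.single_eq_of_ne' (Ne.symm hb)]
      · simp
    have hβsum : (∑ i, β i) = d := by
      rw [hαβ] at hα
      simp only [Finsupp.add_apply, Finset.sum_add_distrib, h2] at hα
      omega
    rw [hαβ, MvPolynomial.monomial_single_add, pow_one]
    exact X_mul_mem h hgen hδ d t (ih β hβsum)

include hgen in
lemma homog_le_Adeg (hδ : 1 ≤ δ) (d : ℕ) :
    MvPolynomial.homogeneousSubmodule (Fin (n + 1)) ℂ d ≤ Adeg h d := by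
  intro p hp
  rw [MvPolynomial.mem_homogeneousSubmodule] at hp
  rw [← p.support_sum_monomial_coeff]
  apply Submodule.sum_mem
  intro α hα
  have hcoeff : MvPolynomial.coeff α p ≠ 0 := MvPolynomial.mem_support_iff.1 hα
  have hdeg : α.degree = d := by
    by_contra hne
    exact hcoeff (hp.coeff_eq_zero hne)
  have hsum : (∑ i, α i) = d := by
    rw [← hdeg, Finsupp.degree]
    exact (Finset.sum_subset (Finset.subset_univ _)
      (fun x _ hx => Finsupp.notMem_support_iff.1 hx)).symm
  have : MvPolynomial.monomial α (MvPolynomial.coeff α p)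
      = (MvPolynomial.coeff α p) • MvPolynomial.monomial α (1:ℂ) := by
    rw [MvPolynomial.smul_monomial, smul_eq_mul, mul_one]
  rw [this]
  exact Submodule.smul_mem _ _ (monomial_mem h hgen hδ d α hsum)

/-- generator exponent pattern for the diagonal monomials -/
def kLj (L : Finset (Fin (δ + n))) (j : Fin (δ + n)) : Fin (δ + n) → ℕ :=
  fun i => (if i ∈ L then 0 else 2) + (if i = j then 1 else 0)

/-- span of products with support of size at least δ+1 -/
noncomputable def Wfull : Submodule ℂ (MvPolynomial (Fin (n + 1)) ℂ) :=
  Submodule.span ℂ {p | ∃ k : Fin (δ + n) → ℕ, (∑ i, k i) = 2 * δ + 1 ∧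
    δ + 1 ≤ (suppk (n := n) (δ := δ) k).card ∧ p = pw h k}

/-- span of the diagonal monomials -/
noncomputable def Msub : Submodule ℂ (MvPolynomial (Fin (n + 1)) ℂ) :=
  Submodule.span ℂ {p | ∃ (L S' : Finset (Fin (δ + n))) (hc : S'.Nonempty),
    L.card = n ∧ S' = Lᶜ ∧ p = pw h (kLj L (S'.min' hc))}

lemma fun_update2_comp (F : Fin (δ+n) → ℕ → ℕ) (k : Fin (δ+n) → ℕ) (i b : Fin (δ+n))
    (x y : ℕ) :
    (fun a => F a (Function.update (Function.update k i x) b y a))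
      = Function.update (Function.update (fun a => F a (k a)) i (F i x)) b (F b y) := by
  funext a
  rcases eq_or_ne a b with rfl | hab
  · simp
  · rcases eq_or_ne a i with rfl | hai
    · simp [Function.update_of_ne hab]
    · simp [Function.update_of_ne hab, Function.update_of_ne hai]

lemma sum_update2 (F : Fin (δ+n) → ℕ → ℕ) (k : Fin (δ+n) → ℕ) {i b : Fin (δ+n)}
    (hib : b ≠ i) (x y : ℕ) :
    (∑ a, F a (Function.update (Function.update k i x) b y a)) + F i (k i) + F b (k b)
      = (∑ a, F a (k a)) + F i x + F b y := by
  classical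
  set G : Fin (δ+n) → ℕ := fun a => F a (k a) with hG
  have key : ∀ X Y : ℕ, (∑ a, (Function.update (Function.update G i X) b Y) a)
      = Y + (X + ∑ a ∈ (Finset.univ \ {b}) \ {i}, G a) := by
    intro X Y
    rw [Finset.sum_update_of_mem (Finset.mem_univ b)]
    congr 1
    rw [Finset.sum_update_of_mem
      (Finset.mem_sdiff.2 ⟨Finset.mem_univ i, by simpa using hib.symm⟩)]
  have h1 : (∑ a, F a (Function.update (Function.update k i x) b y a))
      = F b y + (F i x + ∑ a ∈ (Finset.univ \ {b}) \ {i}, G a) := by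
    rw [fun_update2_comp F k i b x y]
    exact key (F i x) (F b y)
  have h2 : (∑ a, G a) = G b + (G i + ∑ a ∈ (Finset.univ \ {b}) \ {i}, G a) := by
    have := key (G i) (G b)
    rwa [Function.update_eq_self, Function.update_eq_self] at this
  have h2' : (∑ a, F a (k a)) = F b (k b) + (F i (k i) + ∑ a ∈ (Finset.univ \ {b}) \ {i}, G a) := h2
  rw [h1, h2']
  ring

/-- decomposition used to apply `exchange` -/
lemma update_decomp {k : Fin (δ+n) → ℕ} {i : Fin (δ+n)} (hki : 1 ≤ k i) :
    k = Function.update k i (k i - 1) + Pi.single i 1 := by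
  funext a
  rcases eq_or_ne a i with rfl | hai
  · simp; omega
  · simp [Function.update_of_ne hai, Pi.single_eq_of_ne hai]

lemma update_single {k : Fin (δ+n) → ℕ} {i b : Fin (δ+n)} (hbi : b ≠ i) :
    Function.update k i (k i - 1) + Pi.single b 1
      = Function.update (Function.update k i (k i - 1)) b (k b + 1) := by
  funext a
  rcases eq_or_ne a b with rfl | hab
  · simp [Function.update_of_ne hbi, Function.update_self]
  · simp [Function.update_of_ne hab, Pi.single_eq_of_ne hab]

lemma sum_kLj {L : Finset (Fin (δ + n))} (hL : L.card = n) {j : Fin (δ + n)} (hj : j ∉ L) :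
    (∑ i, kLj (n := n) (δ := δ) L j i) = 2 * δ + 1 := by
  unfold kLj
  rw [Finset.sum_add_distrib]
  have h1 : (∑ i, if i ∈ L then (0:ℕ) else 2) = 2 * δ := by
    have hc : (Finset.univ.filter (fun i => ¬ i ∈ L)).card = δ := by
      have he : Finset.univ.filter (fun i => ¬ i ∈ L) = Lᶜ := by
        ext a; simp [Finset.mem_compl]
      rw [he, Finset.card_compl, Fintype.card_fin, hL]
      omega
    rw [Finset.sum_ite, Finset.sum_const, Finset.sum_const, hc]
    simp [mul_comm]
  have h2 : (∑ i, if i = j then (1:ℕ) else 0) = 1 := by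
    simp
  omega

lemma suppk_kLj {L : Finset (Fin (δ + n))} {j : Fin (δ + n)} (hj : j ∉ L) :
    suppk (n := n) (δ := δ) (kLj L j) = Lᶜ := by
  ext a
  simp only [suppk, kLj, Finset.mem_filter, Finset.mem_univ, true_and, Finset.mem_compl]
  rcases eq_or_ne a j with rfl | haj
  · simp [hj]
  · by_cases haL : a ∈ L <;> simp [haL, haj]

lemma nat_dist_def (a b : ℕ) : Nat.dist a b = a - b + (b - a) := rfl

lemma suppk_mem {k : Fin (δ+n) → ℕ} {a : Fin (δ+n)} :
    a ∈ suppk (n:=n) (δ:=δ) k ↔ k a ≠ 0 := by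
  simp [suppk]

lemma kLj_lower {L : Finset (Fin (δ+n))} {j a : Fin (δ+n)} (ha : a ∉ L) :
    2 ≤ kLj (n:=n) (δ:=δ) L j a := by
  simp only [kLj, if_neg ha]
  omega

lemma kLj_zero {L : Finset (Fin (δ+n))} {j a : Fin (δ+n)} (ha : a ∈ L) (haj : a ≠ j) :
    kLj (n:=n) (δ:=δ) L j a = 0 := by
  simp [kLj, ha, haj]

include hgen in
lemma claimC2 (hδ : 1 ≤ δ) : ∀ r : ℕ, ∀ k : Fin (δ+n) → ℕ,
    (suppk (n:=n) (δ:=δ) k).card = δ → (∑ i, k i) = 2*δ+1 →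
    ∀ hne : (suppk (n:=n) (δ:=δ) k).Nonempty,
    (∑ a, Nat.dist (k a)
      (kLj (suppk (n:=n) (δ:=δ) k)ᶜ ((suppk (n:=n) (δ:=δ) k).min' hne) a)) ≤ r →
    pw h k ∈ Wfull h ⊔ Msub h := by
  intro r
  induction r with
  | zero =>
    intro k hcard hsum hne hdist
    -- distance zero: k is exactly the diagonal pattern
    have hz : ∀ a, Nat.dist (k a)
        (kLj (suppk (n:=n) (δ:=δ) k)ᶜ ((suppk (n:=n) (δ:=δ) k).min' hne) a) = 0 := by
      intro a
      have := Finset.sum_eq_zero_iff.1 (Nat.le_zero.1 hdist) a (Finset.mem_univ a)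
      exact this
    have hk : k = kLj (suppk (n:=n) (δ:=δ) k)ᶜ ((suppk (n:=n) (δ:=δ) k).min' hne) := by
      funext a
      exact Nat.eq_of_dist_eq_zero (hz a)
    apply Submodule.mem_sup_right
    apply Submodule.subset_span
    refine ⟨(suppk (n:=n) (δ:=δ) k)ᶜ, suppk (n:=n) (δ:=δ) k, hne, ?_, (compl_compl _).symm, ?_⟩
    · rw [Finset.card_compl, Fintype.card_fin, hcard]; omega
    · rw [← hk]
  | succ r ih =>
    intro k hcard hsum hne hdist
    set S := suppk (n:=n) (δ:=δ) k with hS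
    set j0 := S.min' hne with hj0
    set t : Fin (δ+n) → ℕ := kLj Sᶜ j0 with ht
    by_cases hz : (∑ a, Nat.dist (k a) (t a)) = 0
    · exact ih k hcard hsum hne (show (∑ a, Nat.dist (k a) (t a)) ≤ r by omega)
    -- basic facts about t
    have hj0S : j0 ∈ S := S.min'_mem hne
    have hcardSc : (Sᶜ : Finset (Fin (δ+n))).card = n := by
      rw [Finset.card_compl, Fintype.card_fin, hcard]; omega
    have htsum : (∑ i, t i) = 2*δ+1 := by
      rw [ht]
      exact sum_kLj hcardSc (by simpa using hj0S)
    have htS : ∀ a, a ∈ S → 2 ≤ t a := fun a ha => kLj_lower (by simpa using ha)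
    have htSc : ∀ a, a ∉ S → t a = 0 := by
      intro a ha
      apply kLj_zero (by simpa using ha)
      intro haj; rw [haj] at ha; exact ha hj0S
    -- find an index above target and one below
    have hkt : k ≠ t := by
      intro hk
      apply hz
      apply Finset.sum_eq_zero
      intro a _
      rw [hk, Nat.dist_self]
    have hup : ∃ i, t i < k i := by
      by_contra hc
      push_neg at hc
      have heq : ∀ a ∈ Finset.univ, k a = t a := by
        rw [← Finset.sum_eq_sum_iff_of_le (fun a _ => hc a)]
        rw [hsum, htsum]
      exact hkt (funext fun a => heq a (Finset.mem_univ a))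
    have hdown : ∃ jj, k jj < t jj := by
      by_contra hc
      push_neg at hc
      have heq : ∀ a ∈ Finset.univ, t a = k a := by
        rw [← Finset.sum_eq_sum_iff_of_le (fun a _ => hc a)]
        rw [hsum, htsum]
      exact hkt (funext fun a => (heq a (Finset.mem_univ a)).symm)
    obtain ⟨i, hi⟩ := hup
    obtain ⟨jj, hjj⟩ := hdown
    have hiS : i ∈ S := by
      rw [hS]
      rw [suppk_mem]
      omega
    have hki3 : 3 ≤ k i := by
      have := htS i hiS
      omega
    have hjjS : jj ∈ S := by
      by_contra hc
      rw [htSc jj hc] at hjj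
      omega
    have hij : jj ≠ i := by
      intro hh
      rw [hh] at hjj
      omega
    -- the basis set
    have hjjSc : jj ∉ (Sᶜ : Finset (Fin (δ+n))) := by simpa using hjjS
    have hB : (insert jj (Sᶜ : Finset (Fin (δ+n)))).card = n + 1 := by
      rw [Finset.card_insert_of_notMem hjjSc, hcardSc]
    -- decompose and exchange
    set k0 := Function.update k i (k i - 1) with hk0
    have hdecomp : k = k0 + Pi.single i 1 := update_decomp (by omega)
    obtain ⟨c, hc⟩ := exchange h hgen k0 i hB
    rw [hdecomp, hc]
    apply Submodule.sum_mem
    intro b hb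
    apply Submodule.smul_mem
    have hbi : b ≠ i := by
      rcases Finset.mem_insert.1 hb with rfl | hbSc
      · exact hij
      · intro hh; rw [hh] at hbSc; exact (by simpa using hbSc : i ∉ S) hiS
    rw [update_single hbi]
    set k' := Function.update (Function.update k i (k i - 1)) b (k b + 1) with hk'
    have hsum' : (∑ a, k' a) = 2*δ+1 := by
      have hsu := sum_update2 (fun _ v => v) k hbi (k i - 1) (k b + 1)
      beta_reduce at hsu
      rw [← hk'] at hsu
      omega
    rcases Finset.mem_insert.1 hb with rfl | hbSc
    · -- recursive case b = jj
      have hsupp' : suppk (n:=n) (δ:=δ) k' = S := by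
        ext a
        rw [suppk_mem, hS, suppk_mem]
        rw [hk']
        rcases eq_or_ne a b with rfl | hab
        · rw [Function.update_self]
          have : k a ≠ 0 := by rw [← suppk_mem (k := k)]; exact hjjS
          omega
        · rw [Function.update_of_ne hab]
          rcases eq_or_ne a i with rfl | hai
          · rw [Function.update_self]; omega
          · rw [Function.update_of_ne hai]
      have hne' : (suppk (n:=n) (δ:=δ) k').Nonempty := by rw [hsupp']; exact hne
      have hdist' : (∑ a, Nat.dist (k' a)
          (kLj (suppk (n:=n) (δ:=δ) k')ᶜ ((suppk (n:=n) (δ:=δ) k').min' hne') a)) ≤ r := by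
        have hmin : (suppk (n:=n) (δ:=δ) k').min' hne' = j0 := by
          rw [hj0]; congr 1
        have hcompl : (suppk (n:=n) (δ:=δ) k')ᶜ = Sᶜ := by rw [hsupp']
        simp only [hmin, hcompl, ← ht]
        have hsu := sum_update2 (fun a v => Nat.dist v (t a)) k hbi (k i - 1) (k b + 1)
        beta_reduce at hsu
        rw [← hk'] at hsu
        have hd1 : Nat.dist (k i) (t i) = (k i - t i) + (t i - k i) := rfl
        have hd2 : Nat.dist (k b) (t b) = (k b - t b) + (t b - k b) := rfl
        have hd3 : Nat.dist (k i - 1) (t i) = (k i - 1 - t i) + (t i - (k i - 1)) := rfl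
        have hd4 : Nat.dist (k b + 1) (t b) = (k b + 1 - t b) + (t b - (k b + 1)) := rfl
        omega
      exact ih k' (by rw [hsupp', hcard]) hsum' hne' hdist'
    · -- boundary case b ∈ Sᶜ : support grows to δ+1
      have hkb : k b = 0 := by
        have : b ∉ S := by simpa using hbSc
        rw [hS, suppk_mem] at this
        omega
      apply Submodule.mem_sup_left
      apply Submodule.subset_span
      refine ⟨k', hsum', ?_, rfl⟩
      have hsupp' : suppk (n:=n) (δ:=δ) k' = insert b S := by
        ext a
        rw [suppk_mem, Finset.mem_insert, hS, suppk_mem]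
        rw [hk']
        rcases eq_or_ne a b with rfl | hab
        · rw [Function.update_self]; simp
        · rw [Function.update_of_ne hab]
          rcases eq_or_ne a i with rfl | hai
          · rw [Function.update_self]
            exact ⟨fun _ => Or.inr (by omega), fun _ => by omega⟩
          · rw [Function.update_of_ne hai]
            simp [hab]
      rw [hsupp', Finset.card_insert_of_notMem (by simpa using hbSc), hcard]

lemma sq_step (a b : ℕ) (ha : 3 ≤ a) (hb : b ≤ 1) :
    (a-1)*(a-1) + (b+1)*(b+1) + 2 ≤ a*a + b*b := by
  obtain ⟨c, rfl⟩ : ∃ c, a = c + 3 := ⟨a - 3, by omega⟩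
  have h1 : c + 3 - 1 = c + 2 := by omega
  rw [h1]
  interval_cases b <;> nlinarith

lemma sq_step2 (a : ℕ) (ha : 2 ≤ a) : (a-1)*(a-1) + 1 + 1 ≤ a*a := by
  obtain ⟨c, rfl⟩ : ∃ c, a = c + 2 := ⟨a - 2, by omega⟩
  have h1 : c + 2 - 1 = c + 1 := by omega
  rw [h1]
  nlinarith

include hgen in
lemma claimC1 (hδ : 1 ≤ δ) : ∀ N : ℕ, ∀ k : Fin (δ+n) → ℕ,
    (∑ i, k i) = 2*δ+1 → (∑ i, k i * k i) ≤ N →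
    pw h k ∈ Wfull h ⊔ Msub h := by
  intro N
  induction N with
  | zero =>
    intro k hsum hsq
    exfalso
    have hz : ∀ a ∈ Finset.univ, k a * k a = 0 :=
      Finset.sum_eq_zero_iff.1 (Nat.le_zero.1 hsq)
    have : (∑ i, k i) = 0 := Finset.sum_eq_zero fun a _ =>
      mul_self_eq_zero.mp (hz a (Finset.mem_univ a))
    omega
  | succ N ih =>
    intro k hsum hsq
    by_cases hbig : δ + 1 ≤ (suppk (n:=n) (δ:=δ) k).card
    · apply Submodule.mem_sup_left
      exact Submodule.subset_span ⟨k, hsum, hbig, rfl⟩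
    by_cases heq : (suppk (n:=n) (δ:=δ) k).card = δ
    · have hne : (suppk (n:=n) (δ:=δ) k).Nonempty := by
        rw [← Finset.card_pos, heq]; omega
      exact claimC2 h hgen hδ _ k heq hsum hne (le_refl _)
    -- small support: card ≤ δ - 1
    have hcardlt : (suppk (n:=n) (δ:=δ) k).card ≤ δ - 1 := by
      push_neg at hbig
      omega
    have hex : ∃ i, 2 ≤ k i := by
      by_contra hc
      push_neg at hc
      have h1 : (∑ i, k i) = ∑ i ∈ suppk (n:=n) (δ:=δ) k, k i := by
        rw [suppk]
        exact (Finset.sum_filter_ne_zero _).symm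
      have h2 : (∑ i ∈ suppk (n:=n) (δ:=δ) k, k i)
          ≤ (suppk (n:=n) (δ:=δ) k).card * 1 := by
        apply Finset.sum_le_card_nsmul
        intro x _
        have := hc x
        omega
      omega
    obtain ⟨i, hki⟩ := hex
    have hiS : i ∈ suppk (n:=n) (δ:=δ) k := suppk_mem.2 (by omega)
    have hcompl : n + 1 ≤ ((suppk (n:=n) (δ:=δ) k)ᶜ : Finset (Fin (δ+n))).card := by
      rw [Finset.card_compl, Fintype.card_fin]
      omega
    obtain ⟨B, hBsub, hBcard⟩ := Finset.exists_subset_card_eq hcompl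
    have hdecomp : k = Function.update k i (k i - 1) + Pi.single i 1 :=
      update_decomp (by omega)
    obtain ⟨c, hc⟩ := exchange h hgen (Function.update k i (k i - 1)) i hBcard
    rw [hdecomp, hc]
    apply Submodule.sum_mem
    intro b hb
    apply Submodule.smul_mem
    have hbS : b ∉ suppk (n:=n) (δ:=δ) k := by
      have := hBsub hb
      simpa using this
    have hbi : b ≠ i := by
      intro hh; rw [hh] at hbS; exact hbS hiS
    have hkb : k b = 0 := by
      by_contra hc2
      exact hbS (suppk_mem.2 hc2)
    rw [update_single hbi]
    set k' := Function.update (Function.update k i (k i - 1)) b (k b + 1) with hk'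
    have hsu := sum_update2 (fun _ v => v) k hbi (k i - 1) (k b + 1)
    beta_reduce at hsu
    rw [← hk'] at hsu
    have hsq2 := sum_update2 (fun _ v => v * v) k hbi (k i - 1) (k b + 1)
    beta_reduce at hsq2
    rw [← hk', hkb] at hsq2
    have harith := sq_step2 (k i) hki
    apply ih k' (by omega) (by omega)

/-- the target span: exponents at most 2 -/
noncomputable def Wred : Submodule ℂ (MvPolynomial (Fin (n + 1)) ℂ) :=
  Submodule.span ℂ {p | ∃ k : Fin (δ + n) → ℕ,
    (∑ i, k i) = 2 * δ + 1 ∧ (∀ i, k i ≤ 2) ∧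
    δ + 1 ≤ (suppk (n:=n) (δ:=δ) k).card ∧ p = pw h k}

include hgen in
lemma reduceD (hδ : 1 ≤ δ) : ∀ N : ℕ, ∀ k : Fin (δ+n) → ℕ,
    (∑ i, k i) = 2*δ+1 → δ + 1 ≤ (suppk (n:=n) (δ:=δ) k).card →
    (∑ i, k i * k i) ≤ N → pw h k ∈ Wred h := by
  intro N
  induction N with
  | zero =>
    intro k hsum _ hsq
    exfalso
    have hz : ∀ a ∈ Finset.univ, k a * k a = 0 :=
      Finset.sum_eq_zero_iff.1 (Nat.le_zero.1 hsq)
    have : (∑ i, k i) = 0 := Finset.sum_eq_zero fun a _ =>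
      mul_self_eq_zero.mp (hz a (Finset.mem_univ a))
    omega
  | succ N ih =>
    intro k hsum hsupp hsq
    by_cases hall : ∀ i, k i ≤ 2
    · exact Submodule.subset_span ⟨k, hsum, hall, hsupp, rfl⟩
    push_neg at hall
    obtain ⟨i, hki⟩ := hall
    have hki3 : 3 ≤ k i := hki
    set Bad := Finset.univ.filter (fun a => 2 ≤ k a) with hBad
    have hiBad : i ∈ Bad := by simp [hBad]; omega
    have hbadsum : 2 * Bad.card + 1 ≤ ∑ a ∈ Bad, k a := by
      rw [← Finset.add_sum_erase Bad k hiBad]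
      have h1 : (Bad.erase i).card • 2 ≤ ∑ a ∈ Bad.erase i, k a := by
        apply Finset.card_nsmul_le_sum
        intro x hx
        have := (Finset.mem_filter.1 (Finset.mem_of_mem_erase hx)).2
        omega
      have h2 : (Bad.erase i).card = Bad.card - 1 := Finset.card_erase_of_mem hiBad
      have h3 : 1 ≤ Bad.card := Finset.card_pos.2 ⟨i, hiBad⟩
      simp only [smul_eq_mul] at h1
      omega
    have hbadle : (∑ a ∈ Bad, k a) ≤ 2*δ+1 := by
      rw [← hsum]
      exact Finset.sum_le_sum_of_subset (Finset.subset_univ _)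
    have hbadcard : Bad.card ≤ δ := by omega
    -- Bad.card = δ is impossible
    have hbadlt : Bad.card ≤ δ - 1 := by
      by_contra hc
      have hbc : Bad.card = δ := by omega
      have hsplit : (∑ a ∈ Bad, k a) + ∑ a ∈ Badᶜ, k a = ∑ a, k a :=
        Finset.sum_add_sum_compl Bad k
      have hzero : ∀ a ∈ Badᶜ, k a = 0 := by
        have hz : (∑ a ∈ Badᶜ, k a) = 0 := by omega
        intro a ha
        exact Finset.sum_eq_zero_iff.1 hz a ha
      have hsub : suppk (n:=n) (δ:=δ) k ⊆ Bad := by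
        intro a ha
        by_contra hc2
        have : a ∈ Badᶜ := Finset.mem_compl.2 hc2
        exact (suppk_mem.1 ha) (hzero a this)
      have := Finset.card_le_card hsub
      omega
    have hcompl : n + 1 ≤ (Badᶜ : Finset (Fin (δ+n))).card := by
      rw [Finset.card_compl, Fintype.card_fin]
      omega
    obtain ⟨B, hBsub, hBcard⟩ := Finset.exists_subset_card_eq hcompl
    have hdecomp : k = Function.update k i (k i - 1) + Pi.single i 1 :=
      update_decomp (by omega)
    obtain ⟨c, hc⟩ := exchange h hgen (Function.update k i (k i - 1)) i hBcard
    rw [hdecomp, hc]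
    apply Submodule.sum_mem
    intro b hb
    apply Submodule.smul_mem
    have hbBad : b ∉ Bad := by
      have := hBsub hb
      simpa using this
    have hkb : k b ≤ 1 := by
      by_contra hc2
      exact hbBad (by simp [hBad]; omega)
    have hbi : b ≠ i := by
      intro hh; rw [hh] at hbBad; exact hbBad hiBad
    rw [update_single hbi]
    set k' := Function.update (Function.update k i (k i - 1)) b (k b + 1) with hk'
    have hsu := sum_update2 (fun _ v => v) k hbi (k i - 1) (k b + 1)
    beta_reduce at hsu
    rw [← hk'] at hsu
    have hsq2 := sum_update2 (fun _ v => v * v) k hbi (k i - 1) (k b + 1)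
    beta_reduce at hsq2
    rw [← hk'] at hsq2
    have harith := sq_step (k i) (k b) hki3 hkb
    have hsupp' : suppk (n:=n) (δ:=δ) k ⊆ suppk (n:=n) (δ:=δ) k' := by
      intro a ha
      rw [suppk_mem] at ha ⊢
      rw [hk']
      rcases eq_or_ne a b with rfl | hab
      · rw [Function.update_self]; omega
      · rw [Function.update_of_ne hab]
        rcases eq_or_ne a i with rfl | hai
        · rw [Function.update_self]; omega
        · rw [Function.update_of_ne hai]; exact ha
    apply ih k' (by omega) (le_trans hsupp (Finset.card_le_card hsupp')) (by omega)

lemma eval_kLj_zero {L L' : Finset (Fin (δ+n))} (hL : L.card = n) (hL' : L'.card = n)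
    (hne : L ≠ L') (x : Fin (n+1) → ℂ) (hker : ∀ i ∈ L', (∑ t, h i t * x t) = 0)
    (j : Fin (δ+n)) :
    MvPolynomial.eval x (pw h (kLj L j)) = 0 := by
  have hex : ∃ i ∈ L', i ∉ L := by
    by_contra hc
    push_neg at hc
    have hsub : L' ⊆ L := hc
    exact hne (Finset.eq_of_subset_of_card_le hsub (by omega)).symm
  obtain ⟨i, hiL', hiL⟩ := hex
  rw [pw_eval]
  apply Finset.prod_eq_zero (Finset.mem_univ i)
  rw [hker i hiL', zero_pow]
  have := kLj_lower (n:=n) (δ:=δ) (j := j) hiL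
  omega

lemma eval_kLj_ne_zero {L : Finset (Fin (δ+n))} {j : Fin (δ+n)} (hj : j ∉ L)
    (x : Fin (n+1) → ℂ) (hnv : ∀ i ∉ L, (∑ t, h i t * x t) ≠ 0) :
    MvPolynomial.eval x (pw h (kLj L j)) ≠ 0 := by
  rw [pw_eval, Finset.prod_ne_zero_iff]
  intro i _
  by_cases hiL : i ∈ L
  · have hij : i ≠ j := by intro hh; rw [hh] at hiL; exact hj hiL
    rw [kLj_zero hiL hij, pow_zero]
    exact one_ne_zero
  · exact pow_ne_zero _ (hnv i hiL)

include hgen in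
lemma Wfull_le_vanish : Wfull h ≤ vanishZ n δ h := by
  rw [Wfull, Submodule.span_le]
  rintro p ⟨k, hsum, hsupp, rfl⟩
  exact pw_mem_vanish h k hsupp

include hgen in
lemma Wfull_le_Wred (hδ : 1 ≤ δ) : Wfull h ≤ Wred h := by
  rw [Wfull, Submodule.span_le]
  rintro p ⟨k, hsum, hsupp, rfl⟩
  exact reduceD h hgen hδ (∑ i, k i * k i) k hsum hsupp (le_refl _)

include hgen in
lemma Msub_inf_vanish (hδ : 1 ≤ δ) {q0 : MvPolynomial (Fin (n + 1)) ℂ}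
    (hm : q0 ∈ Msub h) (hv : q0 ∈ vanishZ n δ h) : q0 = 0 := by
  classical
  rw [Msub, Submodule.mem_span_set] at hm
  obtain ⟨c, hcsupp, hcsum⟩ := hm
  have hall : ∀ q, q ∉ c.support := by
    intro q hq
    obtain ⟨L, S', hcS, hLcard, hS'eq, hqeq⟩ := hcsupp hq
    subst hS'eq
    obtain ⟨x, hxcone, hker, hnv⟩ := exists_point h hgen hδ hLcard
    have hvx : MvPolynomial.eval x q0 = 0 := by
      simp only [vanishZ, Submodule.mem_iInf, LinearMap.mem_ker,
        AlgHom.toLinearMap_apply] at hv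
      rw [← aeval_eq_eval]
      exact hv x hxcone
    have hsum' : MvPolynomial.eval x q0
        = ∑ q' ∈ c.support, c q' * MvPolynomial.eval x q' := by
      rw [← hcsum, Finsupp.sum]
      rw [map_sum]
      apply Finset.sum_congr rfl
      intro q' _
      rw [MvPolynomial.smul_eq_C_mul, map_mul, MvPolynomial.eval_C]
    have hsingle : (∑ q' ∈ c.support, c q' * MvPolynomial.eval x q')
        = c q * MvPolynomial.eval x q := by
      apply Finset.sum_eq_single q
      · intro q' hq' hq'ne
        obtain ⟨L'', S'', hcS'', hL''card, hS''eq, hq''eq⟩ := hcsupp hq'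
        subst hS''eq
        have hLL : L'' ≠ L := by
          intro hh
          subst hh
          exact hq'ne (by rw [hq''eq, hqeq])
        rw [hq''eq, eval_kLj_zero h hL''card hLcard hLL x hker]
        ring
      · intro hq2
        exact absurd hq hq2
    have hnz : MvPolynomial.eval x q ≠ 0 := by
      rw [hqeq]
      apply eval_kLj_ne_zero h _ x hnv
      have := Finset.min'_mem (Lᶜ) hcS
      simpa using this
    have hcq : c q = 0 := by
      rw [hvx] at hsum'
      rw [hsingle] at hsum'
      exact (mul_eq_zero.1 hsum'.symm).resolve_right hnz
    exact Finsupp.mem_support_iff.1 hq hcq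
  have hc0 : c = 0 := by
    ext q
    by_cases hq : q ∈ c.support
    · exact absurd hq (hall q)
    · exact Finsupp.notMem_support_iff.1 hq
  rw [← hcsum, hc0]
  simp

include hgen in
lemma Adeg_le_WM (hδ : 1 ≤ δ) : Adeg h (2*δ+1) ≤ Wfull h ⊔ Msub h := by
  rw [Adeg, Submodule.span_le]
  rintro p ⟨k, hsum, rfl⟩
  exact claimC1 h hgen hδ (∑ i, k i * k i) k hsum (le_refl _)

include hgen in
lemma Wred_le_LHS : Wred h ≤
    MvPolynomial.homogeneousSubmodule (Fin (n + 1)) ℂ (2 * δ + 1) ⊓ vanishZ n δ h := by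
  rw [Wred, Submodule.span_le]
  rintro p ⟨k, hsum, _, hsupp, rfl⟩
  exact pw_mem_LHS h k hsum hsupp

end StarCfg

/-- The space of degree `2δ+1` polynomials vanishing on the `C(δ+n,n)` intersection points
`Z` of `δ+n` general hyperplanes `h_1, …, h_{δ+n}` in `ℙ^n` is spanned by the monomials
`h_I = ∏ h_i^{k_i}` of total degree `2δ+1` with support of size at least `δ+1` and all
exponents `k_i ≤ 2`. -/
theorem vanishing_spanned_by_squarefreeish (n δ : ℕ) (hδ : 1 ≤ δ)
    (h : Fin (δ + n) → (Fin (n + 1) → ℂ))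
    (hgen : ∀ T : Finset (Fin (δ + n)), T.card = n + 1 →
      LinearIndependent ℂ (fun i : T => h i)) :
    MvPolynomial.homogeneousSubmodule (Fin (n + 1)) ℂ (2 * δ + 1) ⊓ vanishZ n δ h =
      Submodule.span ℂ {p | ∃ k : Fin (δ + n) → ℕ,
        (∑ i, k i) = 2 * δ + 1 ∧ (∀ i, k i ≤ 2) ∧
        δ + 1 ≤ (Finset.univ.filter (fun i => k i ≠ 0)).card ∧
        p = ∏ i, (linForm (h i)) ^ (k i)} := by
  have hred : StarCfg.Wred h = Submodule.span ℂ {p | ∃ k : Fin (δ + n) → ℕ,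
      (∑ i, k i) = 2 * δ + 1 ∧ (∀ i, k i ≤ 2) ∧
      δ + 1 ≤ (Finset.univ.filter (fun i => k i ≠ 0)).card ∧
      p = ∏ i, (linForm (h i)) ^ (k i)} := rfl
  rw [← hred]
  apply le_antisymm
  · -- hard direction
    intro p hp
    rw [Submodule.mem_inf] at hp
    obtain ⟨hph, hpv⟩ := hp
    have hpA : p ∈ StarCfg.Adeg h (2*δ+1) := StarCfg.homog_le_Adeg h hgen hδ _ hph
    have hWM : p ∈ StarCfg.Wfull h ⊔ StarCfg.Msub h := StarCfg.Adeg_le_WM h hgen hδ hpA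
    rw [Submodule.mem_sup] at hWM
    obtain ⟨w, hw, m, hm, hwm⟩ := hWM
    have hmv : m ∈ vanishZ n δ h := by
      have hwv : w ∈ vanishZ n δ h := StarCfg.Wfull_le_vanish h hgen hw
      have : m = p - w := by rw [← hwm]; ring
      rw [this]
      exact Submodule.sub_mem _ hpv hwv
    have hm0 : m = 0 := StarCfg.Msub_inf_vanish h hgen hδ hm hmv
    have hpw : p = w := by rw [← hwm, hm0, add_zero]
    rw [hpw]
    exact StarCfg.Wfull_le_Wred h hgen hδ hw
  · exact StarCfg.Wred_le_LHS h hgen
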